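/- Let q be a prime, t a natural number, and f a polynomial over ZMod q with degree at most t. Let S be a finite set of t+1 distinct nonzero elements of ZMod q. Then the secret f(0) is recovered from the t+1 shares {f(i) : i ∈ S} by Lagrange interpolation at 0: f(0) = ∑_{i ∈ S} f(i) · ∏_{j ∈ S, j ≠ i} j · (j − i)⁻¹. -/
import Mathlib


/-- Shamir secret sharing correctness: `t+1` distinct nonzero shares recover the
secret `f(0)` via Lagrange interpolation at `0`. -/
theorem shamir_reconstruction (q t : ℕ) [Fact q.Prime]
    (f : Polynomial (ZMod q)) (hdeg : f.degree ≤ t)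
    (S : Finset (ZMod q)) (hcard : S.card = t + 1) (hS0 : (0 : ZMod q) ∉ S) :
    f.eval 0 = ∑ i ∈ S, f.eval i * ∏ j ∈ S.erase i, j * (j - i)⁻¹ := by
  have hinj : Set.InjOn id (S : Set (ZMod q)) := Function.injective_id.injOn
  have hdeg' : f.degree < S.card := by
    rw [hcard]
    exact lt_of_le_of_lt hdeg (by exact_mod_cast Nat.lt_succ_self t)
  have key := Lagrange.eq_interpolate_of_eval_eq (fun i => f.eval i) hinj hdeg'
    (fun i _ => rfl)
  conv_lhs => rw [key]
  rw [Lagrange.interpolate_apply, Polynomial.eval_finset_sum]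
  refine Finset.sum_congr rfl fun i hi => ?_
  rw [Polynomial.eval_mul, Polynomial.eval_C, Lagrange.basis, Polynomial.eval_prod]
  congr 1
  refine Finset.prod_congr rfl fun j hj => ?_
  have hji : j ≠ i := (Finset.mem_erase.mp hj).1
  simp only [Lagrange.basisDivisor, Polynomial.eval_mul, Polynomial.eval_C,
    Polynomial.eval_sub, Polynomial.eval_X, id]
  rw [zero_sub, mul_comm]
  rw [show (i - j)⁻¹ = -(j - i)⁻¹ by rw [← inv_neg, neg_sub]]
  ring
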